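/- Let (S, A, H, P, μ) be a finite episodic MDP, π⁺ a deterministic target policy, and ε > 0. Suppose a step-dependent modified reward function r̃ satisfies: (i) r̃_h(s, π⁺_h(s)) = μ(s, π⁺_h(s)) for all h, s; and (ii) for all h, s and every a ≠ π⁺_h(s), r̃_h(s,a) ≤ Q^{π⁺}_h(s, π⁺_h(s)) − E_{s' ~ P(s,a)}[V^{π⁺}_{h+1}(s')] − ε, where Q^{π⁺} and V^{π⁺} are computed with the true rewards μ. Then in the modified MDP (rewards r̃, transitions P): for every deterministic policy π, every h ∈ {1,…,H}, and every s, Ṽ^π_h(s) ≤ Ṽ^{π⁺}_h(s); for every a ≠ π⁺_h(s) and every π, Q̃^π_h(s,a) ≤ Q̃^{π⁺}_h(s, π⁺_h(s)) − ε; and in particular, if π_h(s) ≠ π⁺_h(s) then Ṽ^π_h(s) ≤ Ṽ^{π⁺}_h(s) − ε. -/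

import Mathlib

open scoped BigOperators

namespace RLAttack

variable {S A : Type*} [Fintype S] [Fintype A]

/-- Expectation of `f` under a `PMF` on a finite type. -/
noncomputable def expVal (p : PMF S) (f : S → ℝ) : ℝ :=
  ∑ s' : S, (p s').toReal * f s'

/-- Auxiliary backward-induction value: `n` steps remaining, current step `h`. -/
noncomputable def valAux (r : ℕ → S → A → ℝ) (P : ℕ → S → A → PMF S)
    (π : ℕ → S → A) : ℕ → ℕ → S → ℝ
  | 0, _, _ => 0
  | n + 1, h, s => r h s (π h s) + expVal (P h s (π h s)) (valAux r P π n (h + 1))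

/-- Value function `V^π_h(s)` for horizon `H`: `V^π_{H+1} = 0` and
`V^π_h(s) = r_h(s, π_h(s)) + E_{s' ~ P_h(s, π_h(s))}[V^π_{h+1}(s')]`. -/
noncomputable def V (H : ℕ) (r : ℕ → S → A → ℝ) (P : ℕ → S → A → PMF S)
    (π : ℕ → S → A) (h : ℕ) (s : S) : ℝ :=
  valAux r P π (H + 1 - h) h s

/-- Q-value function `Q^π_h(s,a) = r_h(s,a) + E_{s' ~ P_h(s,a)}[V^π_{h+1}(s')]`. -/
noncomputable def Q (H : ℕ) (r : ℕ → S → A → ℝ) (P : ℕ → S → A → PMF S)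
    (π : ℕ → S → A) (h : ℕ) (s : S) (a : A) : ℝ :=
  r h s a + expVal (P h s a) (fun s' => V H r P π (h + 1) s')


lemma expVal_mono (p : PMF S) {f g : S → ℝ} (h : ∀ s, f s ≤ g s) :
    expVal p f ≤ expVal p g :=
  Finset.sum_le_sum fun s _ => mul_le_mul_of_nonneg_left (h s) ENNReal.toReal_nonneg

lemma expVal_congr (p : PMF S) {f g : S → ℝ} (h : ∀ s, f s = g s) :
    expVal p f = expVal p g :=
  Finset.sum_congr rfl fun s _ => by rw [h s]

lemma valAux_target_eq (H : ℕ) (P : S → A → PMF S) (μ : S → A → ℝ)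
    (πp : ℕ → S → A) (rt : ℕ → S → A → ℝ)
    (h1 : ∀ h ∈ Finset.Icc 1 H, ∀ s : S, rt h s (πp h s) = μ s (πp h s)) :
    ∀ n h, 1 ≤ h → h + n ≤ H + 1 → ∀ s : S,
      valAux rt (fun _ => P) πp n h s
        = valAux (fun _ s a => μ s a) (fun _ => P) πp n h s := by
  intro n
  induction n with
  | zero => intro h _ _ s; rfl
  | succ n ih =>
    intro h hh hle s
    simp only [valAux]
    rw [h1 h (Finset.mem_Icc.mpr ⟨hh, by omega⟩) s]
    congr 1
    exact expVal_congr _ fun s' => ih (h + 1) (by omega) (by omega) s'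

lemma valAux_dominate (H : ℕ) (P : S → A → PMF S) (μ : S → A → ℝ)
    (πp : ℕ → S → A) (ε : ℝ) (hε : 0 < ε) (rt : ℕ → S → A → ℝ)
    (h1 : ∀ h ∈ Finset.Icc 1 H, ∀ s : S, rt h s (πp h s) = μ s (πp h s))
    (h2 : ∀ h ∈ Finset.Icc 1 H, ∀ s : S, ∀ a : A, a ≠ πp h s →
      rt h s a ≤ Q H (fun _ s a => μ s a) (fun _ => P) πp h s (πp h s)
        - expVal (P s a) (fun s' => V H (fun _ s a => μ s a) (fun _ => P) πp (h + 1) s')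
        - ε) :
    ∀ n h, 1 ≤ h → h + n = H + 1 → ∀ (π : ℕ → S → A) (s : S),
      valAux rt (fun _ => P) π n h s ≤ valAux rt (fun _ => P) πp n h s ∧
      (∀ a : A, a ≠ πp h s → h ≤ H →
        rt h s a + expVal (P s a) (valAux rt (fun _ => P) π (n - 1) (h + 1))
          ≤ valAux rt (fun _ => P) πp n h s - ε) := by
  intro n
  induction n with
  | zero =>
    intro h hh heq π s
    refine ⟨le_refl _, fun a ha hle => ?_⟩
    exfalso; omega
  | succ n ih =>
    intro h hh heq π s
    have hhH : h ∈ Finset.Icc 1 H := Finset.mem_Icc.mpr ⟨hh, by omega⟩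
    have hIH : ∀ (π' : ℕ → S → A) (s' : S),
        valAux rt (fun _ => P) π' n (h + 1) s'
          ≤ valAux rt (fun _ => P) πp n (h + 1) s' :=
      fun π' s' => (ih (h + 1) (by omega) (by omega) π' s').1
    -- key Q bound for off-target actions
    have hQ : ∀ a : A, a ≠ πp h s →
        rt h s a + expVal (P s a) (valAux rt (fun _ => P) π n (h + 1))
          ≤ valAux rt (fun _ => P) πp (n + 1) h s - ε := by
      intro a ha
      have hteq : ∀ s', valAux rt (fun _ => P) πp n (h + 1) s'
          = valAux (fun _ s a => μ s a) (fun _ => P) πp n (h + 1) s' :=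
        fun s' => valAux_target_eq H P μ πp rt h1 n (h + 1) (by omega) (by omega) s'
      have hVtrue : ∀ s', V H (fun _ s a => μ s a) (fun _ => P) πp (h + 1) s'
          = valAux (fun _ s a => μ s a) (fun _ => P) πp n (h + 1) s' := by
        intro s'
        have : H + 1 - (h + 1) = n := by omega
        simp [V, this]
      have hb := h2 h hhH s a ha
      have hmono : expVal (P s a) (valAux rt (fun _ => P) π n (h + 1))
          ≤ expVal (P s a)
              (fun s' => V H (fun _ s a => μ s a) (fun _ => P) πp (h + 1) s') := by
        refine expVal_mono _ fun s' => ?_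
        rw [hVtrue s', ← hteq s']
        exact hIH π s'
      have hQeq : Q H (fun _ s a => μ s a) (fun _ => P) πp h s (πp h s)
          = valAux rt (fun _ => P) πp (n + 1) h s := by
        simp only [Q, valAux]
        rw [h1 h hhH s]
        congr 1
        exact expVal_congr _ fun s' => by rw [hVtrue s', ← hteq s']
      calc rt h s a + expVal (P s a) (valAux rt (fun _ => P) π n (h + 1))
          ≤ (Q H (fun _ s a => μ s a) (fun _ => P) πp h s (πp h s)
              - expVal (P s a)
                  (fun s' => V H (fun _ s a => μ s a) (fun _ => P) πp (h + 1) s') - ε)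
            + expVal (P s a)
                (fun s' => V H (fun _ s a => μ s a) (fun _ => P) πp (h + 1) s') := by
            linarith [add_le_add hb hmono]
        _ = Q H (fun _ s a => μ s a) (fun _ => P) πp h s (πp h s) - ε := by ring
        _ = valAux rt (fun _ => P) πp (n + 1) h s - ε := by rw [hQeq]
    constructor
    · by_cases hpa : π h s = πp h s
      · simp only [valAux, hpa]
        exact add_le_add_right (expVal_mono _ fun s' => hIH π s') _
      · have := hQ (π h s) hpa
        simp only [valAux] at this ⊢
        linarith
    · intro a ha _
      simpa using hQ a ha

/-- If modified rewards agree with the true rewards along the target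
policy and every off-target reward is at most
`Q^{π⁺}_h(s, π⁺_h(s)) − E_{s'~P(s,a)}[V^{π⁺}_{h+1}(s')] − ε` (true-reward quantities),
then in the modified MDP the target policy weakly dominates every policy, every
off-target action is `ε`-suboptimal in `Q̃`-value, and at any disagreeing `(h,s)` the value
gap is at least `ε`. -/
theorem statement8 {S A : Type*} [Fintype S] [Fintype A] [Nonempty S] [Nonempty A]
    (H : ℕ) (hH : 1 ≤ H) (P : S → A → PMF S) (μ : S → A → ℝ)
    (πp : ℕ → S → A) (ε : ℝ) (hε : 0 < ε) (rt : ℕ → S → A → ℝ)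
    (h1 : ∀ h ∈ Finset.Icc 1 H, ∀ s : S, rt h s (πp h s) = μ s (πp h s))
    (h2 : ∀ h ∈ Finset.Icc 1 H, ∀ s : S, ∀ a : A, a ≠ πp h s →
      rt h s a ≤ Q H (fun _ s a => μ s a) (fun _ => P) πp h s (πp h s)
        - expVal (P s a) (fun s' => V H (fun _ s a => μ s a) (fun _ => P) πp (h + 1) s')
        - ε) :
    ∀ π : ℕ → S → A, ∀ h ∈ Finset.Icc 1 H, ∀ s : S,
      V H rt (fun _ => P) π h s ≤ V H rt (fun _ => P) πp h s ∧
      (∀ a : A, a ≠ πp h s →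
        Q H rt (fun _ => P) π h s a ≤ Q H rt (fun _ => P) πp h s (πp h s) - ε) ∧
      (π h s ≠ πp h s →
        V H rt (fun _ => P) π h s ≤ V H rt (fun _ => P) πp h s - ε) := by
  intro π h hmem s
  obtain ⟨hh1, hhH⟩ := Finset.mem_Icc.mp hmem
  obtain ⟨m, hm⟩ : ∃ m, H + 1 - h = m + 1 := ⟨H - h, by omega⟩
  have hsum : h + (m + 1) = H + 1 := by omega
  have key := valAux_dominate H P μ πp ε hε rt h1 h2 (m + 1) h hh1 hsum
  have hVdef : ∀ (π' : ℕ → S → A) (s' : S),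
      V H rt (fun _ => P) π' h s' = valAux rt (fun _ => P) π' (m + 1) h s' := by
    intro π' s'; simp [V, hm]
  have hV1 : ∀ (π' : ℕ → S → A) (s' : S),
      V H rt (fun _ => P) π' (h + 1) s' = valAux rt (fun _ => P) π' m (h + 1) s' := by
    intro π' s'
    have : H + 1 - (h + 1) = m := by omega
    simp [V, this]
  have hQdef : ∀ (π' : ℕ → S → A) (a : A),
      Q H rt (fun _ => P) π' h s a
        = rt h s a + expVal (P s a) (valAux rt (fun _ => P) π' m (h + 1)) := by
    intro π' a
    simp only [Q]
    congr 1
    exact expVal_congr _ fun s' => hV1 π' s'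
  have hQtarget : Q H rt (fun _ => P) πp h s (πp h s)
      = valAux rt (fun _ => P) πp (m + 1) h s := by
    rw [hQdef πp (πp h s)]; rfl
  have hQbound : ∀ a : A, a ≠ πp h s →
      Q H rt (fun _ => P) π h s a ≤ Q H rt (fun _ => P) πp h s (πp h s) - ε := by
    intro a ha
    rw [hQdef π a, hQtarget]
    simpa using (key π s).2 a ha hhH
  refine ⟨?_, hQbound, ?_⟩
  · rw [hVdef π s, hVdef πp s]
    exact (key π s).1
  · intro hne
    have hVQ : V H rt (fun _ => P) π h s = Q H rt (fun _ => P) π h s (π h s) := by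
      rw [hVdef π s, hQdef π (π h s)]; rfl
    rw [hVQ, hVdef πp s, ← hQtarget]
    exact hQbound (π h s) hne

end RLAttack
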